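/- Let ‖·‖ be a norm on c₀₀ that is permutation-invariant and multiplicative. Then there exists p ∈ [1,+∞] such that for every n ≥ 1, the norm of the sequence 1ⁿ consisting of n ones followed by zeros equals n^{1/p} (with the convention n^{1/∞} = 1). -/

import Mathlib

open scoped ENNReal

/-- Tensor product of finitely supported sequences, regarded as a finitely
supported sequence via a fixed bijection `e : ℕ ≃ ℕ × ℕ`. -/
noncomputable def tensor (e : ℕ ≃ ℕ × ℕ) (x y : ℕ →₀ ℝ) : ℕ →₀ ℝ :=
  Finsupp.onFinset ((x.support ×ˢ y.support).image e.symm)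
    (fun n => x (e n).1 * y (e n).2)
    (fun n h => by
      simp only [Finset.mem_image, Finset.mem_product]
      exact ⟨e n, ⟨Finsupp.mem_support_iff.2 (left_ne_zero_of_mul h),
        Finsupp.mem_support_iff.2 (right_ne_zero_of_mul h)⟩, e.symm_apply_apply n⟩)

/-- The sequence `1ⁿ` consisting of `n` ones followed by zeros. -/
noncomputable def oneVec (n : ℕ) : ℕ →₀ ℝ :=
  Finsupp.indicator (Finset.range n) (fun _ _ => 1)

noncomputable def sv (ε : ℕ → ℝ) (n : ℕ) : ℕ →₀ ℝ :=
  Finsupp.indicator (Finset.range n) (fun i _ => ε i)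

lemma tensor_apply (e : ℕ ≃ ℕ × ℕ) (x y : ℕ →₀ ℝ) (p : ℕ) :
    tensor e x y p = x (e p).1 * y (e p).2 := rfl

lemma oneVec_apply (n i : ℕ) : oneVec n i = if i < n then 1 else 0 := by
  classical
  simp [oneVec, Finsupp.indicator_apply]

lemma sv_apply (ε : ℕ → ℝ) (n i : ℕ) : sv ε n i = if i < n then ε i else 0 := by
  classical
  simp [sv, Finsupp.indicator_apply]

lemma oneVec_mem_support {n i : ℕ} : i ∈ (oneVec n).support ↔ i < n := by
  rw [Finsupp.mem_support_iff, oneVec_apply]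
  split_ifs with h <;> simp [h]

lemma exists_perm_extend (s : Finset ℕ) (g : ℕ → ℕ) (h : Set.InjOn g s) :
    ∃ σ : Equiv.Perm ℕ, ∀ i ∈ s, σ i = g i := by
  classical
  induction s using Finset.induction_on with
  | empty => exact ⟨1, by simp⟩
  | @insert a s ha ih =>
    obtain ⟨σ, hσ⟩ := ih (h.mono (by simp [Finset.coe_subset]))
    set c := σ.symm (g a) with hc
    refine ⟨σ * Equiv.swap a c, ?_⟩
    intro i hi
    rcases Finset.mem_insert.1 hi with rfl | his
    · simp [Equiv.swap_apply_left, hc]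
    · have hia : i ≠ a := fun h' => ha (h' ▸ his)
      have hic : i ≠ c := by
        intro h'
        have : σ i = g a := by rw [h', hc]; simp
        rw [hσ i his] at this
        exact hia (h (Finset.mem_insert.2 (Or.inr his)) (Finset.mem_insert_self a s) this)
      simp [Equiv.Perm.mul_apply, Equiv.swap_apply_of_ne_of_ne hia hic, hσ i his]

lemma transfer (N : (ℕ →₀ ℝ) → ℝ)
    (hperm : ∀ (σ : Equiv.Perm ℕ) (x), N (Finsupp.equivMapDomain σ x) = N x)
    (x y : ℕ →₀ ℝ) (g : ℕ → ℕ)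
    (hinj : Set.InjOn g x.support)
    (hval : ∀ i ∈ x.support, y (g i) = x i)
    (hsupp : ∀ j ∈ y.support, ∃ i ∈ x.support, g i = j) :
    N y = N x := by
  obtain ⟨σ, hσ⟩ := exists_perm_extend x.support g hinj
  have key : Finsupp.equivMapDomain σ x = y := by
    ext j
    rcases Classical.em (∃ i ∈ x.support, g i = j) with ⟨i, hi, rfl⟩ | hj
    · have h1 : σ i = g i := hσ i hi
      rw [← h1, Finsupp.equivMapDomain_apply, Equiv.symm_apply_apply, h1, hval i hi]
    · have hy : y j = 0 := by
        by_contra h'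
        exact hj (hsupp j (Finsupp.mem_support_iff.2 h'))
      have hx : x (σ.symm j) = 0 := by
        by_contra h'
        have hm : σ.symm j ∈ x.support := Finsupp.mem_support_iff.2 h'
        exact hj ⟨σ.symm j, hm, by rw [← hσ _ hm]; simp⟩
      simp [Finsupp.equivMapDomain_apply, hx, hy]
  rw [← key, hperm]

section main

lemma oneVec_one : oneVec 1 = Finsupp.single 0 (1:ℝ) := by
  ext i
  rw [oneVec_apply, Finsupp.single_apply]
  rcases Nat.eq_zero_or_pos i with rfl | hi
  · simp
  · rw [if_neg (by omega), if_neg (by omega)]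

variable (e : ℕ ≃ ℕ × ℕ) (N : (ℕ →₀ ℝ) → ℝ)
  (hadd : ∀ x y, N (x + y) ≤ N x + N y)
  (hsmul : ∀ (c : ℝ) (x), N (c • x) = |c| * N x)
  (hdef : ∀ x, N x = 0 ↔ x = 0)
  (hperm : ∀ (σ : Equiv.Perm ℕ) (x), N (Finsupp.equivMapDomain σ x) = N x)
  (hmul : ∀ x y, N (tensor e x y) = N x * N y)

include hadd hsmul hdef hperm hmul

lemma N_single (j : ℕ) : N (Finsupp.single j (1:ℝ)) = N (Finsupp.single 0 1) := by
  have : Finsupp.equivMapDomain (Equiv.swap 0 j) (Finsupp.single 0 (1:ℝ))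
      = Finsupp.single j 1 := by
    rw [Finsupp.equivMapDomain_single, Equiv.swap_apply_left]
  rw [← this, hperm]

lemma N_single_one : N (Finsupp.single 0 (1:ℝ)) = 1 := by
  have ht : tensor e (Finsupp.single 0 (1:ℝ)) (Finsupp.single 0 1)
      = Finsupp.single (e.symm (0,0)) 1 := by
    ext p
    rw [tensor_apply]
    by_cases h : p = e.symm (0,0)
    · subst h
      simp
    · have h2 : e p ≠ (0,0) := fun hc => h (by rw [← hc]; simp)
      have h3 : (e p).1 ≠ 0 ∨ (e p).2 ≠ 0 := by
        by_contra hc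
        push_neg at hc
        exact h2 (Prod.ext hc.1 hc.2)
      have h4 : Finsupp.single (e.symm (0,0)) (1:ℝ) p = 0 :=
        Finsupp.single_eq_of_ne' (fun hc => h hc.symm)
      rcases h3 with h3 | h3
      · rw [Finsupp.single_eq_of_ne' (fun hc => h3 hc.symm), zero_mul, h4]
      · rw [Finsupp.single_eq_of_ne' (fun hc => h3 hc.symm), mul_zero, h4]
  have h5 := hmul (Finsupp.single 0 (1:ℝ)) (Finsupp.single 0 1)
  rw [ht, N_single e N hadd hsmul hdef hperm hmul] at h5
  have h6 : N (Finsupp.single 0 (1:ℝ)) ≠ 0 := by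
    simp only [ne_eq, hdef]
    simp [Finsupp.single_eq_zero]
  have := mul_right_cancel₀ h6 (by rw [← h5, one_mul] : 1 * N (Finsupp.single 0 (1:ℝ)) = _)
  exact this.symm

lemma N_oneVec_one : N (oneVec 1) = 1 := by
  rw [oneVec_one, N_single_one e N hadd hsmul hdef hperm hmul]


lemma N_oneVec_mul (m n : ℕ) (hn : 0 < n) :
    N (oneVec (m * n)) = N (oneVec m) * N (oneVec n) := by
  rw [← hmul]
  refine (transfer N hperm (oneVec (m * n)) (tensor e (oneVec m) (oneVec n))
    (fun k => e.symm (k / n, k % n)) ?_ ?_ ?_).symm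
  · intro k hk k' hk' heq
    have h1 : (k / n, k % n) = (k' / n, k' % n) := e.symm.injective heq
    have h2 : k / n = k' / n := (Prod.ext_iff.1 h1).1
    have h3 : k % n = k' % n := (Prod.ext_iff.1 h1).2
    calc k = n * (k / n) + k % n := (Nat.div_add_mod k n).symm
    _ = n * (k' / n) + k' % n := by rw [h2, h3]
    _ = k' := Nat.div_add_mod k' n
  · intro k hk
    have hk' : k < m * n := oneVec_mem_support.1 hk
    rw [tensor_apply, Equiv.apply_symm_apply]
    have h1 : k / n < m := Nat.div_lt_of_lt_mul (by rwa [Nat.mul_comm] at hk')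
    have h2 : k % n < n := Nat.mod_lt _ hn
    simp only [oneVec_apply, if_pos h1, if_pos h2, if_pos hk']
    ring
  · intro j hj
    rw [Finsupp.mem_support_iff, tensor_apply] at hj
    have h1 : oneVec m (e j).1 ≠ 0 := left_ne_zero_of_mul hj
    have h2 : oneVec n (e j).2 ≠ 0 := right_ne_zero_of_mul hj
    rw [oneVec_apply] at h1 h2
    have h1' : (e j).1 < m := by by_contra hc; rw [if_neg hc] at h1; exact h1 rfl
    have h2' : (e j).2 < n := by by_contra hc; rw [if_neg hc] at h2; exact h2 rfl
    refine ⟨(e j).2 + (e j).1 * n, oneVec_mem_support.2 ?_, ?_⟩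
    · calc (e j).2 + (e j).1 * n < n + (e j).1 * n := by omega
      _ = ((e j).1 + 1) * n := by ring
      _ ≤ m * n := Nat.mul_le_mul_right n (by omega)
    · have hd : ((e j).2 + (e j).1 * n) / n = (e j).1 := by
        rw [Nat.add_mul_div_right _ _ hn, Nat.div_eq_of_lt h2', zero_add]
      have hm : ((e j).2 + (e j).1 * n) % n = (e j).2 := by
        rw [Nat.add_mul_mod_self_right, Nat.mod_eq_of_lt h2']
      show e.symm (((e j).2 + (e j).1 * n) / n, ((e j).2 + (e j).1 * n) % n) = j
      rw [hd, hm]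
      exact (Equiv.symm_apply_eq e).2 rfl


lemma N_sv (ε : ℕ → ℝ) (hε : ∀ i, ε i = 1 ∨ ε i = -1) (n : ℕ) :
    N (sv ε n) = N (oneVec n) := by
  classical
  set w : ℕ →₀ ℝ := sv (fun i => if i = 1 then -1 else 1) 2 with hw
  have hw0 : w 0 = 1 := by rw [hw, sv_apply]; norm_num
  have hw1 : w 1 = -1 := by rw [hw, sv_apply]; norm_num
  have hwlt : ∀ j, w j ≠ 0 ↔ j < 2 := by
    intro j
    rw [hw, sv_apply]
    split_ifs with h h2 <;> simp [h]
  have hsv : ∀ i, sv ε n i ≠ 0 ↔ i < n := by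
    intro i
    rw [sv_apply]
    split_ifs with h
    · simp only [h, iff_true]
      rcases hε i with h' | h' <;> rw [h'] <;> norm_num
    · simp [h]
  have key : N (tensor e (sv ε n) w) = N (tensor e (oneVec n) w) := by
    refine (transfer N hperm (tensor e (sv ε n) w) (tensor e (oneVec n) w)
      (fun p => e.symm ((e p).1, if ε (e p).1 = 1 then (e p).2 else 1 - (e p).2)) ?_ ?_ ?_).symm
    · intro p hp p' hp' heq
      simp only [Finset.mem_coe, Finsupp.mem_support_iff, tensor_apply] at hp hp'
      have hj : (e p).2 < 2 := (hwlt _).1 (right_ne_zero_of_mul hp)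
      have hj' : (e p').2 < 2 := (hwlt _).1 (right_ne_zero_of_mul hp')
      have h1 := e.symm.injective heq
      have hi : (e p).1 = (e p').1 := (Prod.ext_iff.1 h1).1
      have h2 : (if ε (e p).1 = 1 then (e p).2 else 1 - (e p).2)
          = (if ε (e p').1 = 1 then (e p').2 else 1 - (e p').2) := (Prod.ext_iff.1 h1).2
      rw [← hi] at h2
      have hjj : (e p).2 = (e p').2 := by
        split_ifs at h2
        · exact h2
        · omega
      have : e p = e p' := Prod.ext hi hjj
      exact e.injective this
    · intro p hp
      rw [Finsupp.mem_support_iff, tensor_apply] at hp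
      have hi : (e p).1 < n := (hsv _).1 (left_ne_zero_of_mul hp)
      have hj : (e p).2 < 2 := (hwlt _).1 (right_ne_zero_of_mul hp)
      rw [tensor_apply, Equiv.apply_symm_apply, tensor_apply]
      have hone : oneVec n (e p).1 = 1 := by rw [oneVec_apply, if_pos hi]
      have hsve : sv ε n (e p).1 = ε (e p).1 := by rw [sv_apply, if_pos hi]
      rw [hone, hsve, one_mul]
      by_cases h' : ε (e p).1 = 1
      · rw [if_pos h', h', one_mul]
      · have h'' : ε (e p).1 = -1 := (hε _).resolve_left h'
        rw [if_neg h', h'']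
        have hcase : (e p).2 = 0 ∨ (e p).2 = 1 := by omega
        rcases hcase with h0 | h0 <;> rw [h0]
        · rw [hw1, hw0]; norm_num
        · rw [hw0, hw1]; norm_num
    · intro q hq
      rw [Finsupp.mem_support_iff, tensor_apply] at hq
      have hi : (e q).1 < n := by
        have := left_ne_zero_of_mul hq
        rw [oneVec_apply] at this
        by_contra hc
        rw [if_neg hc] at this
        exact this rfl
      have hl : (e q).2 < 2 := (hwlt _).1 (right_ne_zero_of_mul hq)
      refine ⟨e.symm ((e q).1, if ε (e q).1 = 1 then (e q).2 else 1 - (e q).2),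
        ?_, ?_⟩
      · rw [Finsupp.mem_support_iff, tensor_apply, Equiv.apply_symm_apply]
        have hεne : ε (e q).1 ≠ 0 := by rcases hε (e q).1 with h' | h' <;> rw [h'] <;> norm_num
        have hj2 : (if ε (e q).1 = 1 then (e q).2 else 1 - (e q).2) < 2 := by
          split_ifs <;> omega
        refine mul_ne_zero ((hsv _).2 hi) ((hwlt _).2 hj2)
      · simp only [Equiv.apply_symm_apply]
        split_ifs with h'
        · exact (Equiv.symm_apply_eq e).2 rfl
        · have h2 : 1 - (1 - (e q).2) = (e q).2 := by omega
          rw [h2]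
          exact (Equiv.symm_apply_eq e).2 rfl
    -- end transfer
  have hmw := hmul (sv ε n) w
  have hmo := hmul (oneVec n) w
  have hNw : N w ≠ 0 := by
    simp only [ne_eq, hdef]
    intro hzero
    have := congrArg (fun v : ℕ →₀ ℝ => v 0) hzero
    simp [hw0] at this
  have : N (sv ε n) * N w = N (oneVec n) * N w := by rw [← hmw, ← hmo, key]
  exact mul_right_cancel₀ hNw this

lemma N_oneVec_mono : Monotone (fun n => N (oneVec n)) := by
  apply monotone_nat_of_le_succ
  intro n
  show N (oneVec n) ≤ N (oneVec (n + 1))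
  classical
  have hεpm : ∀ i, (fun i => if i = n then (-1:ℝ) else 1) i = 1 ∨
      (fun i => if i = n then (-1:ℝ) else 1) i = -1 := by
    intro i; by_cases h : i = n <;> simp [h]
  have hid : oneVec (n+1) + sv (fun i => if i = n then (-1:ℝ) else 1) (n+1)
      = (2:ℝ) • oneVec n := by
    ext i
    simp only [Finsupp.add_apply, Finsupp.smul_apply, oneVec_apply, sv_apply, smul_eq_mul]
    by_cases h1 : i < n
    · rw [if_pos (show i < n+1 by omega), if_pos (show i < n+1 by omega),
        if_neg (show ¬ i = n by omega), if_pos h1]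
      norm_num
    · by_cases h2 : i = n
      · subst h2
        rw [if_pos (show i < i+1 by omega), if_pos (show i < i+1 by omega), if_pos rfl,
          if_neg (show ¬ i < i by omega)]
        norm_num
      · rw [if_neg (show ¬ i < n+1 by omega), if_neg (show ¬ i < n+1 by omega),
          if_neg (show ¬ i < n by omega)]
        norm_num
  have h2 := hadd (oneVec (n+1)) (sv (fun i => if i = n then (-1:ℝ) else 1) (n+1))
  rw [N_sv e N hadd hsmul hdef hperm hmul _ hεpm (n+1)] at h2
  have h3 : N ((2:ℝ) • oneVec n) = 2 * N (oneVec n) := by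
    rw [hsmul]; norm_num
  rw [hid, h3] at h2
  linarith

lemma N_oneVec_ge_one (n : ℕ) (hn : 1 ≤ n) : 1 ≤ N (oneVec n) := by
  have := N_oneVec_mono e N hadd hsmul hdef hperm hmul hn
  simpa [N_oneVec_one e N hadd hsmul hdef hperm hmul] using this

lemma N_oneVec_two_le : N (oneVec 2) ≤ 2 := by
  have hid : oneVec 2 = oneVec 1 + Finsupp.single 1 (1:ℝ) := by
    ext i
    rw [Finsupp.add_apply, oneVec_apply, oneVec_apply, Finsupp.single_apply]
    by_cases h0 : i = 0
    · subst h0; norm_num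
    · by_cases h1 : i = 1
      · subst h1; norm_num
      · rw [if_neg (by omega), if_neg (by omega), if_neg (by omega)]; norm_num
  have := hadd (oneVec 1) (Finsupp.single 1 (1:ℝ))
  rw [← hid, N_oneVec_one e N hadd hsmul hdef hperm hmul,
    N_single e N hadd hsmul hdef hperm hmul 1,
    N_single_one e N hadd hsmul hdef hperm hmul] at this
  linarith

lemma N_oneVec_pow (m : ℕ) (hm : 1 ≤ m) (k : ℕ) :
    N (oneVec (m ^ k)) = N (oneVec m) ^ k := by
  induction k with
  | zero => simpa using N_oneVec_one e N hadd hsmul hdef hperm hmul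
  | succ k ih =>
    rw [pow_succ, N_oneVec_mul e N hadd hsmul hdef hperm hmul (m ^ k) m (by omega), ih, pow_succ]

end main

/-- For a permutation-invariant multiplicative norm on `c₀₀` there exists
`p ∈ [1,∞]` with `‖1ⁿ‖ = n^(1/p)` for all `n ≥ 1` (with `n^(1/∞) = 1`). -/
theorem norm_oneVec_eq_rpow
    (e : ℕ ≃ ℕ × ℕ) (N : (ℕ →₀ ℝ) → ℝ)
    (hadd : ∀ x y, N (x + y) ≤ N x + N y)
    (hsmul : ∀ (c : ℝ) (x), N (c • x) = |c| * N x)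
    (hdef : ∀ x, N x = 0 ↔ x = 0)
    (hperm : ∀ (σ : Equiv.Perm ℕ) (x), N (Finsupp.equivMapDomain σ x) = N x)
    (hmul : ∀ x y, N (tensor e x y) = N x * N y) :
    ∃ p : ℝ≥0∞, 1 ≤ p ∧ ∀ n : ℕ, 1 ≤ n →
      N (oneVec n) = if p = ∞ then 1 else (n : ℝ) ^ (1 / p.toReal) := by
  classical
  set f : ℕ → ℝ := fun n => N (oneVec n) with hf
  have f1 : f 1 = 1 := N_oneVec_one e N hadd hsmul hdef hperm hmul
  have fmono : Monotone f := N_oneVec_mono e N hadd hsmul hdef hperm hmul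
  have fge : ∀ n, 1 ≤ n → 1 ≤ f n := fun n hn =>
    N_oneVec_ge_one e N hadd hsmul hdef hperm hmul n hn
  have fpow : ∀ m, 1 ≤ m → ∀ k, f (m ^ k) = f m ^ k := fun m hm k =>
    N_oneVec_pow e N hadd hsmul hdef hperm hmul m hm k
  have f2le : f 2 ≤ 2 := N_oneVec_two_le e N hadd hsmul hdef hperm hmul
  have key : ∀ m n : ℕ, 2 ≤ m → 2 ≤ n →
      Real.log (f m) * Real.log n ≤ Real.log (f n) * Real.log m := by
    intro m n hm hn
    set A := Real.log (f m) with hA'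
    set B := Real.log (f n) with hB'
    set Lm := Real.log m with hLm'
    set Ln := Real.log n with hLn'
    have hLm : 0 < Lm := Real.log_pos (by exact_mod_cast hm)
    have hLn : 0 < Ln := Real.log_pos (by exact_mod_cast hn)
    have hB : 0 ≤ B := Real.log_nonneg (fge n (by omega))
    have hA : 0 ≤ A := Real.log_nonneg (fge m (by omega))
    have main : ∀ k : ℕ, 1 ≤ k → (k:ℝ) * (A * Ln - Lm * B) ≤ Ln * B := by
      intro k hk
      set j : ℕ := ⌊((k:ℝ) * Lm) / Ln⌋₊ + 1 with hj
      have hjlt : (k:ℝ) * Lm < (j:ℝ) * Ln := by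
        have h1 : ((k:ℝ) * Lm) / Ln < (j:ℝ) := by
          rw [hj]; push_cast
          exact Nat.lt_floor_add_one _
        calc (k:ℝ)*Lm = ((k:ℝ)*Lm/Ln)*Ln := by field_simp
        _ < (j:ℝ) * Ln := mul_lt_mul_of_pos_right h1 hLn
      have hjle : (j:ℝ) * Ln ≤ (k:ℝ) * Lm + Ln := by
        have h0 : (0:ℝ) ≤ (k:ℝ)*Lm/Ln := by positivity
        have h1 : (j:ℝ) ≤ (k:ℝ)*Lm/Ln + 1 := by
          rw [hj]; push_cast
          have h2 := Nat.floor_le h0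
          linarith
        calc (j:ℝ)*Ln ≤ ((k:ℝ)*Lm/Ln + 1)*Ln := mul_le_mul_of_nonneg_right h1 hLn.le
        _ = (k:ℝ)*Lm + Ln := by field_simp
      have hpowle : m ^ k ≤ n ^ j := by
        have e1 : Real.exp ((k:ℝ)*Lm) = (m:ℝ)^k := by
          rw [hLm', ← Real.log_pow]
          exact Real.exp_log (by positivity)
        have e2 : Real.exp ((j:ℝ)*Ln) = (n:ℝ)^j := by
          rw [hLn', ← Real.log_pow]
          exact Real.exp_log (by positivity)
        have h2 : ((m:ℝ))^k ≤ ((n:ℝ))^j := by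
          rw [← e1, ← e2]
          exact Real.exp_le_exp.2 hjlt.le
        exact_mod_cast h2
      have hfmk : f m ^ k ≤ f n ^ j := by
        rw [← fpow m (by omega) k, ← fpow n (by omega) j]
        exact fmono hpowle
      have hfmpos : (0:ℝ) < f m ^ k := by
        have := fge m (by omega); positivity
      have hlog : (k:ℝ) * A ≤ (j:ℝ) * B := by
        have h1 := Real.log_le_log hfmpos hfmk
        rw [Real.log_pow, Real.log_pow] at h1
        exact h1
      nlinarith [mul_le_mul_of_nonneg_right hlog hLn.le,
        mul_le_mul_of_nonneg_right hjle hB]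
    by_contra hcon
    push_neg at hcon
    have hδ : 0 < A * Ln - Lm * B := by nlinarith
    obtain ⟨k, hk⟩ := exists_nat_gt (Ln * B / (A * Ln - Lm * B))
    have hk0 : (0:ℝ) ≤ Ln * B / (A * Ln - Lm * B) := by positivity
    have hk1 : 1 ≤ k := by
      by_contra hc
      have : k = 0 := by omega
      rw [this] at hk
      simp at hk
      linarith
    have h1 := main k hk1
    have h2 : Ln * B < (k:ℝ) * (A * Ln - Lm * B) := by
      rw [div_lt_iff₀ hδ] at hk
      linarith
    linarith
  set s := Real.log (f 2) / Real.log 2 with hs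
  have hl2 : (0:ℝ) < Real.log 2 := Real.log_pos one_lt_two
  have hs0 : 0 ≤ s := div_nonneg (Real.log_nonneg (fge 2 (by omega))) hl2.le
  have hs1 : s ≤ 1 := by
    rw [hs, div_le_one hl2]
    exact Real.log_le_log (by linarith [fge 2 (by omega)]) f2le
  have hfs : ∀ n : ℕ, 1 ≤ n → f n = (n:ℝ) ^ s := by
    intro n hn
    rcases eq_or_lt_of_le hn with h1 | h1
    · rw [← h1, f1]
      norm_num
    · have hn2 : 2 ≤ n := h1
      have heq : Real.log (f n) * Real.log 2 = Real.log (f 2) * Real.log n :=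
        le_antisymm (key n 2 hn2 (le_refl 2)) (key 2 n (le_refl 2) hn2)
      have hlogfn : Real.log (f n) = s * Real.log n := by
        rw [hs]
        field_simp
        linarith [heq]
      have hfn_pos : 0 < f n := lt_of_lt_of_le one_pos (fge n (by omega))
      have hnpos : (0:ℝ) < (n:ℝ) := by exact_mod_cast (by omega : 0 < n)
      rw [← Real.exp_log hfn_pos, hlogfn, Real.rpow_def_of_pos hnpos, mul_comm]
  rcases eq_or_lt_of_le hs0 with hs' | hs'
  · refine ⟨⊤, le_top, ?_⟩
    intro n hn
    have h2 := hfs n hn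
    rw [← hs', Real.rpow_zero] at h2
    rw [if_pos rfl]
    exact h2
  · refine ⟨ENNReal.ofReal s⁻¹, ?_, ?_⟩
    · rw [← ENNReal.ofReal_one]
      exact ENNReal.ofReal_le_ofReal ((one_le_inv₀ hs').2 hs1)
    · intro n hn
      rw [if_neg ENNReal.ofReal_ne_top,
        ENNReal.toReal_ofReal (by positivity), one_div, inv_inv]
      exact hfs n hn
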